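/- The PMACE ptychography data-fitting operator is invertible: for 0 < α < 1 and y_j ≥ 0 componentwise, the map v ↦ (1-α) v + α D^{-1} F* ( y_j ⊙ (F D v)/|F D v| ), where F is a unitary (discrete Fourier) transform and D an invertible diagonal matrix, is injective on vectors v for which F D v has all nonzero entries. -/

import Mathlib

open Matrix

private lemma pmace_key (a b : ℝ) (ha : 0 < a) (hb : 0 ≤ b) (z₁ z₂ : ℂ)
    (h₁ : z₁ ≠ 0) (h₂ : z₂ ≠ 0)
    (h : (a : ℂ) * z₁ + (b : ℂ) * (z₁ / ((‖z₁‖ : ℝ) : ℂ)) =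
         (a : ℂ) * z₂ + (b : ℂ) * (z₂ / ((‖z₂‖ : ℝ) : ℂ))) : z₁ = z₂ := by
  have hr₁ : (0 : ℝ) < ‖z₁‖ := norm_pos_iff.mpr h₁
  have hr₂ : (0 : ℝ) < ‖z₂‖ := norm_pos_iff.mpr h₂
  have e₁ : (a : ℂ) * z₁ + (b : ℂ) * (z₁ / ((‖z₁‖ : ℝ) : ℂ)) =
      z₁ * (((a + b / ‖z₁‖ : ℝ) : ℂ)) := by
    rw [Complex.ofReal_add, Complex.ofReal_div]
    field_simp
  have e₂ : (a : ℂ) * z₂ + (b : ℂ) * (z₂ / ((‖z₂‖ : ℝ) : ℂ)) =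
      z₂ * (((a + b / ‖z₂‖ : ℝ) : ℂ)) := by
    rw [Complex.ofReal_add, Complex.ofReal_div]
    field_simp
  rw [e₁, e₂] at h
  have hc₁ : 0 < a + b / ‖z₁‖ := by positivity
  have hc₂ : 0 < a + b / ‖z₂‖ := by positivity
  have habs := congrArg (‖·‖) h
  simp only [norm_mul, Complex.norm_real, Real.norm_eq_abs,
    abs_of_pos hc₁, abs_of_pos hc₂] at habs
  have hsame : ‖z₁‖ = ‖z₂‖ := by
    have hA : ‖z₁‖ * (a + b / ‖z₁‖) = a * ‖z₁‖ + b := by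
      field_simp
    have hB : ‖z₂‖ * (a + b / ‖z₂‖) = a * ‖z₂‖ + b := by
      field_simp
    rw [hA, hB] at habs
    have : a * ‖z₁‖ = a * ‖z₂‖ := by linarith
    exact mul_left_cancel₀ ha.ne' this
  rw [hsame] at h
  exact mul_right_cancel₀ (by exact_mod_cast hc₂.ne') h

theorem pmace_data_fitting_agent_injective
    (n : ℕ)
    (F : Matrix (Fin n) (Fin n) ℂ)
    (hF : F * Fᴴ = 1 ∧ Fᴴ * F = 1)
    (d : Fin n → ℂ) (hd : ∀ k, d k ≠ 0)
    (y : Fin n → ℝ) (hy : ∀ k, 0 ≤ y k)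
    (α : ℝ) (hα : α ∈ Set.Ioo (0 : ℝ) 1)
    (Φ : (Fin n → ℂ) → (Fin n → ℂ))
    (hΦ : ∀ v, Φ v =
      ((1 - α : ℝ) : ℂ) • v +
        ((α : ℝ) : ℂ) •
          (Matrix.diagonal (fun k => (d k)⁻¹) *ᵥ
            (Fᴴ *ᵥ
              fun k =>
                ((y k : ℝ) : ℂ) *
                  ((F *ᵥ (Matrix.diagonal d *ᵥ v)) k /
                    ((‖(F *ᵥ (Matrix.diagonal d *ᵥ v)) k‖ : ℝ) : ℂ))))) :
    Set.InjOn Φ {v | ∀ k, (F *ᵥ (Matrix.diagonal d *ᵥ v)) k ≠ 0} := by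
  intro v₁ hv₁ v₂ hv₂ heq
  set L : (Fin n → ℂ) → (Fin n → ℂ) := fun x => F *ᵥ (Matrix.diagonal d *ᵥ x) with hL
  have hDDinv : Matrix.diagonal d * Matrix.diagonal (fun k => (d k)⁻¹) = 1 := by
    rw [Matrix.diagonal_mul_diagonal]
    convert Matrix.diagonal_one using 2
    exact funext fun k => mul_inv_cancel₀ (hd k)
  have hDinvD : Matrix.diagonal (fun k => (d k)⁻¹) * Matrix.diagonal d = 1 := by
    rw [Matrix.diagonal_mul_diagonal]
    convert Matrix.diagonal_one using 2
    exact funext fun k => inv_mul_cancel₀ (hd k)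
  have hD : ∀ t : Fin n → ℂ,
      Matrix.diagonal d *ᵥ (Matrix.diagonal (fun k => (d k)⁻¹) *ᵥ t) = t := fun t => by
    rw [Matrix.mulVec_mulVec, hDDinv, Matrix.one_mulVec]
  have hDrev : ∀ t : Fin n → ℂ,
      Matrix.diagonal (fun k => (d k)⁻¹) *ᵥ (Matrix.diagonal d *ᵥ t) = t := fun t => by
    rw [Matrix.mulVec_mulVec, hDinvD, Matrix.one_mulVec]
  have hFF : ∀ t : Fin n → ℂ, F *ᵥ (Fᴴ *ᵥ t) = t := fun t => by
    rw [Matrix.mulVec_mulVec, hF.1, Matrix.one_mulVec]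
  have hFrev : ∀ t : Fin n → ℂ, Fᴴ *ᵥ (F *ᵥ t) = t := fun t => by
    rw [Matrix.mulVec_mulVec, hF.2, Matrix.one_mulVec]
  have hLΦ : ∀ v, L (Φ v) =
      ((1 - α : ℝ) : ℂ) • L v +
        ((α : ℝ) : ℂ) • fun k =>
          ((y k : ℝ) : ℂ) * (L v k / ((‖L v k‖ : ℝ) : ℂ)) := by
    intro v
    rw [hL]
    simp only [hΦ v, Matrix.mulVec_add, Matrix.mulVec_smul]
    rw [hD, hFF]
  have hLeq : L (Φ v₁) = L (Φ v₂) := by rw [heq]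
  rw [hLΦ v₁, hLΦ v₂] at hLeq
  have hLv : L v₁ = L v₂ := by
    funext k
    have hk := congrFun hLeq k
    simp only [Pi.add_apply, Pi.smul_apply, smul_eq_mul] at hk
    refine pmace_key (1 - α) (α * y k) (by linarith [hα.2]) (mul_nonneg hα.1.le (hy k))
      _ _ (hv₁ k) (hv₂ k) ?_
    push_cast
    push_cast at hk
    linear_combination hk
  calc v₁ = Matrix.diagonal (fun k => (d k)⁻¹) *ᵥ (Fᴴ *ᵥ L v₁) := by rw [hL]; rw [hFrev, hDrev]
    _ = Matrix.diagonal (fun k => (d k)⁻¹) *ᵥ (Fᴴ *ᵥ L v₂) := by rw [hLv]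
    _ = v₂ := by rw [hL]; rw [hFrev, hDrev]
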